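/- arXiv:2203.13622 — 2 statements merged into one kernel-verified Lean document; each statement's English description precedes it below -/
import Mathlib

section
/- Let X be a topological space, Y and Z locally compact Hausdorff spaces, f₁ : X → Y continuous and f₂ : Y → Z proper continuous. Then the relative Stone–Čech compactifications β_Y(X, f₁) and β_Z(X, f₂ ∘ f₁) are homeomorphic; equivalently, C_b(X)·f₁*(C_0(Y)) = C_b(X)·(f₂∘f₁)*(C_0(Z)) as C*-subalgebras of C_b(X). -/
open scoped ZeroAtInfty BoundedContinuousFunction
open WeakDual Filter

/-- The pullback `r*(h) = h ∘ r` of a `C₀` function along a continuous map, as a bounded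
continuous function. -/
noncomputable def pullbackBCF {X B : Type*} [TopologicalSpace X] [TopologicalSpace B]
    (r : C(X, B)) (h : C₀(B, ℂ)) : X →ᵇ ℂ :=
  h.toBCF.compContinuous r

/-- The commutative C*-algebra `H_X = C_b(X) · r*(C₀(B))`, realised as the closure of the
non-unital star subalgebra of `C_b(X)` generated by the products `f · r*(h)`. -/
noncomputable def relSCAlg {X B : Type*} [TopologicalSpace X] [TopologicalSpace B]
    (r : C(X, B)) : NonUnitalStarSubalgebra ℂ (X →ᵇ ℂ) :=
  (NonUnitalStarAlgebra.adjoin ℂ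
    {w : X →ᵇ ℂ | ∃ f : X →ᵇ ℂ, ∃ h : C₀(B, ℂ), w = f * pullbackBCF r h}).topologicalClosure

/-- The relative Stone–Čech compactification `β_B X` of a `B`-space `(X, r)`: the character
space (spectrum) of `H_X = C_b(X) · r*(C₀(B))`. -/
noncomputable def RelSC {X B : Type*} [TopologicalSpace X] [TopologicalSpace B]
    (r : C(X, B)) :=
  characterSpace ℂ (relSCAlg r)

/-- Evaluation at a point `x : X`, as an element of the weak dual of `H_X`. -/
noncomputable def relSCEvalChar {X B : Type*} [TopologicalSpace X] [TopologicalSpace B]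
    (r : C(X, B)) (x : X) : WeakDual ℂ (relSCAlg r) :=
  (BoundedContinuousFunction.evalCLM ℂ x).comp
    (⟨{ toFun := fun f => (f : X →ᵇ ℂ),
        map_add' := fun _ _ => rfl,
        map_smul' := fun _ _ => rfl }, continuous_subtype_val⟩ :
      relSCAlg r →L[ℂ] (X →ᵇ ℂ))

/-- The canonical map `i : X → β_B X`, sending a point to the evaluation character. -/
noncomputable def relSCMap {X B : Type*} [TopologicalSpace X] [TopologicalSpace B]
    [LocallyCompactSpace B] [T2Space B] (r : C(X, B)) (x : X) : RelSC r := by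
  refine ⟨relSCEvalChar r x, ?_, fun f g => rfl⟩
  obtain ⟨h, h_comp, -, hx⟩ := exists_continuous_nonneg_pos (r x)
  have hC0 : Tendsto (fun b => (h b : ℂ)) (Filter.cocompact B) (nhds 0) := by
    simpa [Function.comp_def] using ((Complex.continuous_ofReal.tendsto 0).comp
      (HasCompactSupport.is_zero_at_infty h_comp))
  set h' : C₀(B, ℂ) := ⟨⟨fun b => (h b : ℂ), Complex.continuous_ofReal.comp h.continuous⟩, hC0⟩
  have hmem : (1 : X →ᵇ ℂ) * pullbackBCF r h' ∈ relSCAlg r :=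
    (NonUnitalStarAlgebra.adjoin ℂ _).le_topologicalClosure
      (NonUnitalStarAlgebra.subset_adjoin ℂ _ ⟨1, h', rfl⟩)
  intro h0
  have h2 : ((1 : X →ᵇ ℂ) * pullbackBCF r h') x = 0 := by
    have := congrArg (fun φ : WeakDual ℂ (relSCAlg r) => φ ⟨_, hmem⟩) h0
    exact this
  apply hx
  have h3 : (h (r x) : ℂ) = 0 := by
    simpa [pullbackBCF, h', BoundedContinuousFunction.coe_compContinuous] using h2
  exact_mod_cast h3

/-- If `f₂ : Y → Z` is proper, then `β_Y(X, f₁)` and `β_Z(X, f₂ ∘ f₁)` agree: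
the defining C*-subalgebras of `C_b(X)` are equal, and the compactifications are
homeomorphic. -/
theorem relSC_along_proper_composite
    {X Y Z : Type*} [TopologicalSpace X] [TopologicalSpace Y] [TopologicalSpace Z]
    [LocallyCompactSpace Y] [T2Space Y] [LocallyCompactSpace Z] [T2Space Z]
    (f₁ : C(X, Y)) (f₂ : C(Y, Z)) (hf₂ : IsProperMap (⇑f₂ : Y → Z)) :
    relSCAlg f₁ = relSCAlg (f₂.comp f₁) ∧
      Nonempty ((RelSC f₁ : Type _) ≃ₜ (RelSC (f₂.comp f₁) : Type _)) := by
  have hco : Tendsto (⇑f₂) (cocompact Y) (cocompact Z) := by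
    rw [hasBasis_cocompact.tendsto_right_iff]
    intro K hK
    filter_upwards [(hf₂.isCompact_preimage hK).compl_mem_cocompact] with y hy
    exact hy
  set co : CocompactMap Y Z := ⟨f₂, hco⟩ with hco_def
  have key : ∀ (g : C₀(Z, ℂ)), pullbackBCF (f₂.comp f₁) g = pullbackBCF f₁ (g.comp co) := by
    intro g; ext x; rfl
  have heq : relSCAlg f₁ = relSCAlg (f₂.comp f₁) := by
    apply le_antisymm
    · -- relSCAlg f₁ ≤ relSCAlg (f₂.comp f₁)
      apply NonUnitalStarSubalgebra.topologicalClosure_minimal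
      · apply NonUnitalStarAlgebra.adjoin_le
        rintro w ⟨f, h, rfl⟩
        -- show f * pullbackBCF f₁ h ∈ relSCAlg (f₂.comp f₁), a closed set
        show f * pullbackBCF f₁ h ∈ closure ((NonUnitalStarAlgebra.adjoin ℂ
          {w : X →ᵇ ℂ | ∃ f : X →ᵇ ℂ, ∃ g : C₀(Z, ℂ),
            w = f * pullbackBCF (f₂.comp f₁) g} : NonUnitalStarSubalgebra ℂ (X →ᵇ ℂ)) : Set (X →ᵇ ℂ))
        apply Metric.mem_closure_iff.mpr
        intro ε hε
        set δ : ℝ := ε / (2 * (‖f‖ + 1)) with hδ_def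
        have hfpos : (0:ℝ) < ‖f‖ + 1 := by positivity
        have hδ : 0 < δ := by positivity
        -- find compact K in Y outside which ‖h‖ < δ
        have hmem : {y : Y | ‖h y‖ < δ} ∈ cocompact Y := by
          have := Metric.tendsto_nhds.mp h.zero_at_infty' δ hδ
          exact (by simpa [dist_eq_norm, Set.setOf_subset_setOf] using this : ∀ᶠ y in cocompact Y, ‖h y‖ < δ)
        obtain ⟨K, hK, hKsub⟩ := mem_cocompact.mp hmem
        -- Urysohn function on Z, equal to 1 on f₂ '' K
        obtain ⟨g, hg1, _, hg_supp, hg01⟩ :=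
          exists_continuous_one_zero_of_isCompact (hK.image f₂.continuous)
            isClosed_empty (Set.disjoint_empty _)
        have hgC0 : Tendsto (fun z => (g z : ℂ)) (cocompact Z) (nhds 0) := by
          simpa [Function.comp_def] using ((Complex.continuous_ofReal.tendsto 0).comp
            (HasCompactSupport.is_zero_at_infty hg_supp))
        set gC : C₀(Z, ℂ) :=
          ⟨⟨fun z => (g z : ℂ), Complex.continuous_ofReal.comp g.continuous⟩, hgC0⟩ with hgC_def
        refine ⟨(f * pullbackBCF f₁ h) * pullbackBCF (f₂.comp f₁) gC,
          NonUnitalStarAlgebra.subset_adjoin ℂ _ ⟨f * pullbackBCF f₁ h, gC, rfl⟩, ?_⟩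
        rw [dist_eq_norm]
        have hbound : ‖f * pullbackBCF f₁ h -
            (f * pullbackBCF f₁ h) * pullbackBCF (f₂.comp f₁) gC‖ ≤ ‖f‖ * δ := by
          apply (BoundedContinuousFunction.norm_le (by positivity)).mpr
          intro x
          have hx : (f * pullbackBCF f₁ h - (f * pullbackBCF f₁ h) * pullbackBCF (f₂.comp f₁) gC) x
              = f x * h (f₁ x) * (1 - (g (f₂ (f₁ x)) : ℂ)) := by
            simp [pullbackBCF, hgC_def]
            ring
          rw [hx]
          by_cases hxK : f₁ x ∈ K
          · have : g (f₂ (f₁ x)) = 1 := hg1 (Set.mem_image_of_mem _ hxK)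
            simp [this]
            positivity
          · have h1 : ‖h (f₁ x)‖ < δ := hKsub (by simpa using hxK)
            have h2 : ‖(1 : ℂ) - (g (f₂ (f₁ x)) : ℂ)‖ ≤ 1 := by
              rw [show (1 : ℂ) - (g (f₂ (f₁ x)) : ℂ) = ((1 - g (f₂ (f₁ x)) : ℝ) : ℂ) by push_cast; ring]
              rw [Complex.norm_real]
              have := hg01 (f₂ (f₁ x))
              rw [Real.norm_eq_abs, abs_le]
              constructor <;> [linarith [this.2]; linarith [this.1]]
            calc ‖f x * h (f₁ x) * (1 - (g (f₂ (f₁ x)) : ℂ))‖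
                = ‖f x‖ * ‖h (f₁ x)‖ * ‖(1 : ℂ) - (g (f₂ (f₁ x)) : ℂ)‖ := by
                  rw [norm_mul, norm_mul]
              _ ≤ ‖f‖ * δ * 1 := by
                  apply mul_le_mul _ h2 (norm_nonneg _) (by positivity)
                  exact mul_le_mul (f.norm_coe_le_norm x) h1.le (norm_nonneg _) (norm_nonneg f)
              _ = ‖f‖ * δ := mul_one _
        calc ‖f * pullbackBCF f₁ h -
              (f * pullbackBCF f₁ h) * pullbackBCF (f₂.comp f₁) gC‖
            ≤ ‖f‖ * δ := hbound
          _ < ε := by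
              rw [hδ_def, mul_div_assoc']
              rw [div_lt_iff₀ (by positivity)]
              nlinarith [norm_nonneg f, hε]
      · exact isClosed_closure
    · -- relSCAlg (f₂.comp f₁) ≤ relSCAlg f₁
      apply NonUnitalStarSubalgebra.topologicalClosure_minimal
      · apply NonUnitalStarAlgebra.adjoin_le
        rintro w ⟨f, g, rfl⟩
        exact (NonUnitalStarAlgebra.adjoin ℂ _).le_topologicalClosure
          (NonUnitalStarAlgebra.subset_adjoin ℂ _ ⟨f, g.comp co, by rw [key]⟩)
      · exact isClosed_closure
  refine ⟨heq, ?_⟩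
  show Nonempty ((characterSpace ℂ (relSCAlg f₁)) ≃ₜ characterSpace ℂ (relSCAlg (f₂.comp f₁)))
  rw [heq]
  exact ⟨Homeomorph.refl _⟩
end

section
/- Let I be a set, B_i locally compact Hausdorff spaces, and r_i : Y_i → B_i continuous maps for i ∈ I. Set B = ⨿_{i∈I} B_i and Y = ⨿_{i∈I} Y_i with the induced anchor map r : Y → B. Then β_B Y is homeomorphic to the disjoint union ⨿_{i∈I} β_{B_i} Y_i. -/
open scoped ZeroAtInfty BoundedContinuousFunction
open WeakDual Filter

open scoped Classical
open Topology
set_option maxHeartbeats 1000000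
set_option synthInstance.maxHeartbeats 400000

section Aux
variable {ι : Type*}

/-- extension by zero of a function on one summand -/
noncomputable def extFun {Z : ι → Type*} (i : ι) (f : Z i → ℂ) : (Σ j, Z j) → ℂ :=
  fun p => if h : p.1 = i then f (h ▸ p.2) else 0

lemma extFun_mk_self {Z : ι → Type*} (i : ι) (f : Z i → ℂ) (y : Z i) :
    extFun i f ⟨i, y⟩ = f y := dif_pos rfl

lemma extFun_mk_ne {Z : ι → Type*} {i j : ι} (h : j ≠ i) (f : Z i → ℂ) (y : Z j) :
    extFun i f ⟨j, y⟩ = 0 := dif_neg h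

lemma continuous_extFun {Z : ι → Type*} [∀ i, TopologicalSpace (Z i)] (i : ι)
    (f : Z i → ℂ) (hf : Continuous f) : Continuous (extFun i f) := by
  apply continuous_sigma
  intro j
  rcases eq_or_ne j i with rfl | hne
  · simpa [funext fun y => extFun_mk_self j f y] using hf
  · simpa [funext fun y => extFun_mk_ne hne f y] using continuous_const

lemma norm_extFun_le {Z : ι → Type*} [∀ i, TopologicalSpace (Z i)] (i : ι)
    (f : Z i →ᵇ ℂ) (p : Σ j, Z j) : ‖extFun i (⇑f) p‖ ≤ ‖f‖ := by
  obtain ⟨j, y⟩ := p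
  rcases eq_or_ne j i with rfl | hne
  · rw [extFun_mk_self]; exact f.norm_coe_le_norm y
  · rw [extFun_mk_ne hne]; simpa using norm_nonneg f

/-- extension by zero as a bounded continuous function -/
noncomputable def extBCF {Z : ι → Type*} [∀ i, TopologicalSpace (Z i)] (i : ι)
    (f : Z i →ᵇ ℂ) : (Σ j, Z j) →ᵇ ℂ :=
  BoundedContinuousFunction.ofNormedAddCommGroup (extFun i ⇑f)
    (continuous_extFun i _ f.continuous) ‖f‖ (norm_extFun_le i f)

@[simp] lemma extBCF_mk_self {Z : ι → Type*} [∀ i, TopologicalSpace (Z i)] (i : ι)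
    (f : Z i →ᵇ ℂ) (y : Z i) : extBCF i f ⟨i, y⟩ = f y := extFun_mk_self i _ y

lemma extBCF_mk_ne {Z : ι → Type*} [∀ i, TopologicalSpace (Z i)] {i j : ι} (h : j ≠ i)
    (f : Z i →ᵇ ℂ) (y : Z j) : extBCF i f ⟨j, y⟩ = 0 := extFun_mk_ne h _ y

variable {Z : ι → Type*} [∀ i, TopologicalSpace (Z i)]

/-- restriction to one summand -/
noncomputable def resBCF (i : ι) (f : (Σ j, Z j) →ᵇ ℂ) : Z i →ᵇ ℂ :=
  f.compContinuous ⟨Sigma.mk i, continuous_sigmaMk⟩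

@[simp] lemma resBCF_apply (i : ι) (f : (Σ j, Z j) →ᵇ ℂ) (y : Z i) :
    resBCF i f y = f ⟨i, y⟩ := rfl

@[simp] lemma resBCF_extBCF (i : ι) (f : Z i →ᵇ ℂ) : resBCF i (extBCF i f) = f := by
  ext y; simp

lemma resBCF_extBCF_ne {i j : ι} (h : j ≠ i) (f : Z i →ᵇ ℂ) :
    resBCF j (extBCF i f) = 0 := by
  ext y; simpa using extBCF_mk_ne h f y

lemma extBCF_mul_extBCF_ne {i j : ι} (h : i ≠ j) (f : Z i →ᵇ ℂ) (g : Z j →ᵇ ℂ) :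
    extBCF i f * extBCF j g = 0 := by
  ext ⟨k, y⟩
  rcases eq_or_ne k i with rfl | hk
  · have : k ≠ j := fun e => h e
    simp [extBCF_mk_ne this g]
  · simp [extBCF_mk_ne hk f]

lemma extBCF_mul (i : ι) (f g : Z i →ᵇ ℂ) :
    extBCF i (f * g) = extBCF i f * extBCF i g := by
  ext ⟨k, y⟩
  rcases eq_or_ne k i with rfl | hk
  · simp
  · simp [extBCF_mk_ne hk]

lemma extBCF_add (i : ι) (f g : Z i →ᵇ ℂ) :
    extBCF i (f + g) = extBCF i f + extBCF i g := by
  ext ⟨k, y⟩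
  rcases eq_or_ne k i with rfl | hk
  · simp
  · simp [extBCF_mk_ne hk]

lemma extBCF_smul (i : ι) (c : ℂ) (f : Z i →ᵇ ℂ) :
    extBCF i (c • f) = c • extBCF i f := by
  ext ⟨k, y⟩
  rcases eq_or_ne k i with rfl | hk
  · simp
  · simp [extBCF_mk_ne hk]

lemma extBCF_star (i : ι) (f : Z i →ᵇ ℂ) :
    extBCF i (star f) = star (extBCF i f) := by
  ext ⟨k, y⟩
  rcases eq_or_ne k i with rfl | hk
  · simp
  · simp [extBCF_mk_ne hk]

@[simp] lemma extBCF_zero (i : ι) : extBCF (Z := Z) i 0 = 0 := by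
  ext ⟨k, y⟩
  rcases eq_or_ne k i with rfl | hk
  · simp
  · simp [extBCF_mk_ne hk]

lemma lipschitz_extBCF (i : ι) : LipschitzWith 1 (extBCF (Z := Z) i) := by
  apply LipschitzWith.of_dist_le_mul
  intro f g
  rw [NNReal.coe_one, one_mul]
  refine (BoundedContinuousFunction.dist_le dist_nonneg).2 fun p => ?_
  obtain ⟨j, y⟩ := p
  rcases eq_or_ne j i with rfl | hne
  · simpa using BoundedContinuousFunction.dist_coe_le_dist y
  · simp [extBCF_mk_ne hne, dist_nonneg]

lemma lipschitz_resBCF (i : ι) : LipschitzWith 1 (resBCF (Z := Z) i) := by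
  apply LipschitzWith.of_dist_le_mul
  intro f g
  rw [NNReal.coe_one, one_mul]
  refine (BoundedContinuousFunction.dist_le dist_nonneg).2 fun y => ?_
  simpa using BoundedContinuousFunction.dist_coe_le_dist (⟨i, y⟩ : Σ j, Z j)

end Aux
section Aux2
variable {ι : Type*} {B : ι → Type*} {Y : ι → Type*}
  [∀ i, TopologicalSpace (B i)] [∀ i, TopologicalSpace (Y i)]

/-- restriction of a C₀ function to one summand -/
noncomputable def resC0 (i : ι) (h : C₀((Σ j, B j), ℂ)) : C₀(B i, ℂ) :=
  h.comp (⟨⟨Sigma.mk i, continuous_sigmaMk⟩,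
    Topology.IsClosedEmbedding.sigmaMk.tendsto_cocompact⟩ : CocompactMap (B i) (Σ j, B j))

@[simp] lemma resC0_apply (i : ι) (h : C₀((Σ j, B j), ℂ)) (b : B i) :
    resC0 i h b = h ⟨i, b⟩ := rfl

/-- extension by zero of a C₀ function -/
noncomputable def extC0 (i : ι) (h : C₀(B i, ℂ)) : C₀((Σ j, B j), ℂ) where
  toContinuousMap := ⟨extFun i ⇑h, continuous_extFun i _ h.continuous⟩
  zero_at_infty' := by
    rw [tendsto_def]
    intro s hs
    obtain ⟨K, hK, hKs⟩ := mem_cocompact.mp (h.zero_at_infty' hs)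
    refine mem_cocompact.mpr ⟨Sigma.mk i '' K, hK.image continuous_sigmaMk, ?_⟩
    rintro ⟨j, y⟩ hp
    rcases eq_or_ne j i with rfl | hj
    · have hy : y ∉ K := fun hy => hp ⟨y, hy, rfl⟩
      simpa [extFun_mk_self] using hKs hy
    · simpa [extFun_mk_ne hj] using mem_of_mem_nhds hs

@[simp] lemma extC0_mk_self (i : ι) (h : C₀(B i, ℂ)) (b : B i) :
    extC0 i h ⟨i, b⟩ = h b := extFun_mk_self i _ b

lemma extC0_mk_ne {i j : ι} (hj : j ≠ i) (h : C₀(B i, ℂ)) (b : B j) :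
    extC0 i h ⟨j, b⟩ = 0 := extFun_mk_ne hj _ b

/-- restriction as a star algebra hom -/
noncomputable def resHom (i : ι) :
    ((Σ j, Y j) →ᵇ ℂ) →⋆ₙₐ[ℂ] (Y i →ᵇ ℂ) where
  toFun := resBCF i
  map_smul' _ _ := by ext; simp [resBCF]
  map_zero' := by ext; simp [resBCF]
  map_add' _ _ := by ext; simp [resBCF]
  map_mul' _ _ := by ext; simp [resBCF]
  map_star' _ := by ext; simp [resBCF]

@[simp] lemma resHom_apply (i : ι) (f : (Σ j, Y j) →ᵇ ℂ) :
    resHom (Y := Y) i f = resBCF i f := rfl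

/-- extension as a star algebra hom -/
noncomputable def extHom (i : ι) :
    (Y i →ᵇ ℂ) →⋆ₙₐ[ℂ] ((Σ j, Y j) →ᵇ ℂ) where
  toFun := extBCF i
  map_smul' := extBCF_smul i
  map_zero' := extBCF_zero i
  map_add' := extBCF_add i
  map_mul' := extBCF_mul i
  map_star' := extBCF_star i

@[simp] lemma extHom_apply (i : ι) (f : Y i →ᵇ ℂ) :
    extHom (Y := Y) i f = extBCF i f := rfl

variable (r : ∀ i, C(Y i, B i))

/-- the anchor map of the disjoint union -/
noncomputable def sAnchor : C((Σ i, Y i), (Σ i, B i)) :=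
  ⟨Sigma.map id fun i => ⇑(r i), Continuous.sigma_map fun i => (r i).continuous⟩

@[simp] lemma sAnchor_mk (i : ι) (y : Y i) : sAnchor r ⟨i, y⟩ = ⟨i, r i y⟩ := rfl

lemma resBCF_pullback (i : ι) (h : C₀((Σ j, B j), ℂ)) :
    resBCF i (pullbackBCF (sAnchor r) h) = pullbackBCF (r i) (resC0 i h) := rfl

lemma extBCF_mul_pullback (i : ι) (f : Y i →ᵇ ℂ) (h : C₀(B i, ℂ)) :
    extBCF i (f * pullbackBCF (r i) h)
      = extBCF i f * pullbackBCF (sAnchor r) (extC0 i h) := by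
  ext ⟨k, y⟩
  rcases eq_or_ne k i with rfl | hk
  · simp [pullbackBCF]
  · simp [extBCF_mk_ne hk, pullbackBCF]

lemma isClosed_relSCAlg {X Bb : Type*} [TopologicalSpace X] [TopologicalSpace Bb]
    (ρ : C(X, Bb)) : IsClosed (relSCAlg ρ : Set (X →ᵇ ℂ)) :=
  (NonUnitalStarAlgebra.adjoin ℂ _).isClosed_topologicalClosure

lemma gen_mem_relSCAlg {X Bb : Type*} [TopologicalSpace X] [TopologicalSpace Bb]
    (ρ : C(X, Bb)) (f : X →ᵇ ℂ) (h : C₀(Bb, ℂ)) :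
    f * pullbackBCF ρ h ∈ relSCAlg ρ :=
  (NonUnitalStarAlgebra.adjoin ℂ _).le_topologicalClosure
    (NonUnitalStarAlgebra.subset_adjoin ℂ _ ⟨f, h, rfl⟩)

lemma res_mem (i : ι) {w : (Σ j, Y j) →ᵇ ℂ} (hw : w ∈ relSCAlg (sAnchor r)) :
    resBCF i w ∈ relSCAlg (r i) := by
  have key : relSCAlg (sAnchor r) ≤
      (relSCAlg (r i)).comap (resHom (Y := Y) i) := by
    apply NonUnitalStarSubalgebra.topologicalClosure_minimal
    · apply NonUnitalStarAlgebra.adjoin_le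
      rintro w ⟨f, h, rfl⟩
      show resBCF i (f * pullbackBCF (sAnchor r) h) ∈ relSCAlg (r i)
      rw [show resBCF i (f * pullbackBCF (sAnchor r) h)
            = resBCF i f * resBCF i (pullbackBCF (sAnchor r) h) from
          map_mul (resHom (Y := Y) i) _ _, resBCF_pullback]
      exact gen_mem_relSCAlg _ _ _
    · exact (isClosed_relSCAlg (r i)).preimage (lipschitz_resBCF i).continuous
  exact key hw

lemma ext_mem (i : ι) {w : Y i →ᵇ ℂ} (hw : w ∈ relSCAlg (r i)) :
    extBCF i w ∈ relSCAlg (sAnchor r) := by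
  have key : relSCAlg (r i) ≤
      (relSCAlg (sAnchor r)).comap (extHom (Y := Y) i) := by
    apply NonUnitalStarSubalgebra.topologicalClosure_minimal
    · apply NonUnitalStarAlgebra.adjoin_le
      rintro w ⟨f, h, rfl⟩
      show extBCF i (f * pullbackBCF (r i) h) ∈ relSCAlg (sAnchor r)
      rw [extBCF_mul_pullback]
      exact gen_mem_relSCAlg _ _ _
    · exact (isClosed_relSCAlg (sAnchor r)).preimage (lipschitz_extBCF i).continuous
  exact key hw

end Aux2
section Aux3
variable {ι : Type*} {B : ι → Type*} {Y : ι → Type*}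
  [∀ i, TopologicalSpace (B i)] [∀ i, TopologicalSpace (Y i)]
variable (r : ∀ i, C(Y i, B i))

lemma sigma_compact_subset {Z : ι → Type*} [∀ i, TopologicalSpace (Z i)]
    {K : Set (Σ j, Z j)} (hK : IsCompact K) :
    ∃ F : Finset ι, K ⊆ ⋃ j ∈ F, Set.range (Sigma.mk j) := by
  have hcov : K ⊆ ⋃ j, Set.range (@Sigma.mk ι Z j) := by
    rintro ⟨j, y⟩ _
    exact Set.mem_iUnion.mpr ⟨j, ⟨y, rfl⟩⟩
  exact hK.elim_finite_subcover _ (fun j => isOpen_range_sigmaMk) hcov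

/-- The union of the images of the summand algebras. -/
noncomputable def MSet : Set ((Σ j, Y j) →ᵇ ℂ) :=
  ⋃ i, extBCF i '' (relSCAlg (r i) : Set (Y i →ᵇ ℂ))

lemma MSet_subset : MSet r ⊆ (relSCAlg (sAnchor r) : Set _) := by
  rintro w hw
  obtain ⟨i, a, ha, rfl⟩ := Set.mem_iUnion.mp hw
  exact ext_mem r i ha

lemma dense_MSet {x : (Σ j, Y j) →ᵇ ℂ} (hx : x ∈ relSCAlg (sAnchor r)) :
    x ∈ closure (NonUnitalStarAlgebra.adjoin ℂ (MSet r) : Set ((Σ j, Y j) →ᵇ ℂ)) := by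
  set T := NonUnitalStarAlgebra.adjoin ℂ (MSet r)
  have key : relSCAlg (sAnchor r) ≤ T.topologicalClosure := by
    apply NonUnitalStarSubalgebra.topologicalClosure_minimal
    · apply NonUnitalStarAlgebra.adjoin_le
      rintro w ⟨f, h, rfl⟩
      show f * pullbackBCF (sAnchor r) h ∈ T.topologicalClosure
      set w := f * pullbackBCF (sAnchor r) h with hw
      have hwmem : w ∈ relSCAlg (sAnchor r) := gen_mem_relSCAlg _ _ _
      show w ∈ closure (T : Set _)
      rw [Metric.mem_closure_iff]
      intro ε hε
      set ε' := ε / (‖f‖ + 1) with hε'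
      have hfpos : (0 : ℝ) < ‖f‖ + 1 := by positivity
      have hε'pos : 0 < ε' := div_pos hε hfpos
      have hball : (⇑h) ⁻¹' Metric.ball 0 ε' ∈ cocompact (Σ j, B j) :=
        h.zero_at_infty' (Metric.ball_mem_nhds 0 hε'pos)
      obtain ⟨K, hK, hKs⟩ := mem_cocompact.mp hball
      obtain ⟨F, hF⟩ := sigma_compact_subset hK
      set t : (Σ j, Y j) →ᵇ ℂ := ∑ j ∈ F, extBCF j (resBCF j w) with ht
      have htmem : t ∈ (T : Set _) := by
        apply sum_mem
        intro j _
        apply NonUnitalStarAlgebra.subset_adjoin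
        exact Set.mem_iUnion.mpr ⟨j, ⟨resBCF j w, res_mem r j hwmem, rfl⟩⟩
      refine ⟨t, htmem, ?_⟩
      rw [dist_eq_norm]
      have hbound : ‖w - t‖ ≤ ‖f‖ * ε' := by
        refine (BoundedContinuousFunction.norm_le (by positivity)).2 fun p => ?_
        obtain ⟨j, y⟩ := p
        have htval : t ⟨j, y⟩ = if j ∈ F then w ⟨j, y⟩ else 0 := by
          rw [ht]
          rw [BoundedContinuousFunction.coe_sum, Finset.sum_apply]
          by_cases hj : j ∈ F
          · rw [if_pos hj]
            rw [Finset.sum_eq_single_of_mem j hj]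
            · simp
            · intro k _ hk
              exact extBCF_mk_ne (Ne.symm hk) _ y
          · rw [if_neg hj]
            apply Finset.sum_eq_zero
            intro k hk
            refine extBCF_mk_ne (fun e => hj ?_) _ y
            rw [e]; exact hk
        by_cases hj : j ∈ F
        · simp [BoundedContinuousFunction.coe_sub, htval, hj, mul_nonneg (norm_nonneg f) hε'pos.le]
        · have hnotK : (⟨j, r j y⟩ : Σ j, B j) ∉ K := by
            intro hmem
            have h2 := hF hmem
            simp only [Set.mem_iUnion, Set.mem_range] at h2
            obtain ⟨k, hkF, hk⟩ := h2
            obtain ⟨z, hz⟩ := hk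
            have hkj : k = j := congrArg Sigma.fst hz
            exact hj (hkj ▸ hkF)
          have hsmall : ‖h ⟨j, r j y⟩‖ < ε' := mem_ball_zero_iff.mp (hKs hnotK)
          have : (w - t) ⟨j, y⟩ = f ⟨j, y⟩ * h ⟨j, r j y⟩ := by
            simp [htval, hj, hw, pullbackBCF]
          rw [this, norm_mul]
          exact mul_le_mul (f.norm_coe_le_norm _) hsmall.le (norm_nonneg _)
            (norm_nonneg f)
      refine lt_of_le_of_lt hbound ?_
      rw [hε']
      rw [show ‖f‖ * (ε / (‖f‖ + 1)) = ‖f‖ / (‖f‖ + 1) * ε by ring]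
      have h1 : ‖f‖ / (‖f‖ + 1) < 1 := (div_lt_one hfpos).mpr (lt_add_one _)
      calc ‖f‖ / (‖f‖ + 1) * ε < 1 * ε := by
            exact mul_lt_mul_of_pos_right h1 hε
        _ = ε := one_mul ε
    · exact T.isClosed_topologicalClosure
  exact key hx

end Aux3
section Aux4
variable {ι : Type*} {B : ι → Type*} {Y : ι → Type*}
  [∀ i, TopologicalSpace (B i)] [∀ i, TopologicalSpace (Y i)]
variable (r : ∀ i, C(Y i, B i))

/-- restriction, as a continuous linear map between the subtype algebras -/
noncomputable def resCLM (i : ι) :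
    ↥(relSCAlg (sAnchor r)) →L[ℂ] ↥(relSCAlg (r i)) where
  toFun w := ⟨resBCF i ↑w, res_mem r i w.2⟩
  map_add' x y := Subtype.ext (map_add (resHom (Y := Y) i) _ _)
  map_smul' c x := Subtype.ext (map_smul (resHom (Y := Y) i) c _)
  cont := ((lipschitz_resBCF i).continuous.comp continuous_subtype_val).subtype_mk _

@[simp] lemma resCLM_coe (i : ι) (x : ↥(relSCAlg (sAnchor r))) :
    (resCLM r i x : (Y i) →ᵇ ℂ) = resBCF i ↑x := rfl

/-- extension, as a continuous linear map between the subtype algebras -/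
noncomputable def extCLM (i : ι) :
    ↥(relSCAlg (r i)) →L[ℂ] ↥(relSCAlg (sAnchor r)) where
  toFun w := ⟨extBCF i ↑w, ext_mem r i w.2⟩
  map_add' x y := Subtype.ext (map_add (extHom (Y := Y) i) _ _)
  map_smul' c x := Subtype.ext (map_smul (extHom (Y := Y) i) c _)
  cont := ((lipschitz_extBCF i).continuous.comp continuous_subtype_val).subtype_mk _

@[simp] lemma extCLM_coe (i : ι) (x : ↥(relSCAlg (r i))) :
    (extCLM r i x : (Σ j, Y j) →ᵇ ℂ) = extBCF i ↑x := rfl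

lemma resCLM_mul (i : ι) (x y : ↥(relSCAlg (sAnchor r))) :
    resCLM r i (x * y) = resCLM r i x * resCLM r i y :=
  Subtype.ext (map_mul (resHom (Y := Y) i) _ _)

lemma extCLM_mul (i : ι) (x y : ↥(relSCAlg (r i))) :
    extCLM r i (x * y) = extCLM r i x * extCLM r i y :=
  Subtype.ext (map_mul (extHom (Y := Y) i) _ _)

lemma resCLM_extCLM (i : ι) (a : ↥(relSCAlg (r i))) :
    resCLM r i (extCLM r i a) = a :=
  Subtype.ext (by simp)

lemma resCLM_extCLM_ne {i j : ι} (h : j ≠ i) (a : ↥(relSCAlg (r i))) :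
    resCLM r j (extCLM r i a) = 0 :=
  Subtype.ext (by simpa using resBCF_extBCF_ne h (↑a : Y i →ᵇ ℂ))

/-- two multiplicative functionals that agree on all extended summand elements agree -/
lemma agree_on_W (χ ζ : WeakDual ℂ ↥(relSCAlg (sAnchor r)))
    (hχ : ∀ x y, χ (x * y) = χ x * χ y) (hζ : ∀ x y, ζ (x * y) = ζ x * ζ y)
    (hM : ∀ (i : ι) (a : Y i →ᵇ ℂ) (ha : a ∈ relSCAlg (r i)),
      χ ⟨extBCF i a, ext_mem r i ha⟩ = ζ ⟨extBCF i a, ext_mem r i ha⟩) :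
    χ = ζ := by
  have hle : NonUnitalStarAlgebra.adjoin ℂ (MSet r) ≤ relSCAlg (sAnchor r) :=
    NonUnitalStarAlgebra.adjoin_le (MSet_subset r)
  have key : ∀ (z : (Σ j, Y j) →ᵇ ℂ) (hz : z ∈ NonUnitalStarAlgebra.adjoin ℂ (MSet r)),
      χ ⟨z, hle hz⟩ = ζ ⟨z, hle hz⟩ ∧
        χ ⟨star z, star_mem (hle hz)⟩ = ζ ⟨star z, star_mem (hle hz)⟩ := by
    intro z hz
    refine NonUnitalStarAlgebra.adjoin_induction (R := ℂ) (s := MSet r)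
      (p := fun x hx => χ ⟨x, hle hx⟩ = ζ ⟨x, hle hx⟩ ∧
        χ ⟨star x, star_mem (hle hx)⟩ = ζ ⟨star x, star_mem (hle hx)⟩)
      ?_ ?_ ?_ ?_ ?_ ?_ hz
    · -- mem
      intro x hx
      simp only [MSet, Set.mem_iUnion, Set.mem_image] at hx
      obtain ⟨i, a, ha, rfl⟩ := hx
      constructor
      · exact hM i a ha
      · have e : (⟨star (extBCF i a), star_mem (hle (NonUnitalStarAlgebra.subset_adjoin ℂ _
            (by exact Set.mem_iUnion.mpr ⟨i, ⟨a, ha, rfl⟩⟩)))⟩ : ↥(relSCAlg (sAnchor r)))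
            = ⟨extBCF i (star a), ext_mem r i (star_mem ha)⟩ :=
          Subtype.ext (extBCF_star i a).symm
        rw [e]
        exact hM i (star a) (star_mem ha)
    · -- add
      intro x y hx hy px py
      obtain ⟨px1, px2⟩ := px
      obtain ⟨py1, py2⟩ := py
      constructor
      · have e : (⟨x + y, hle (add_mem hx hy)⟩ : ↥(relSCAlg (sAnchor r)))
            = ⟨x, hle hx⟩ + ⟨y, hle hy⟩ := Subtype.ext rfl
        rw [e, map_add, map_add, px1, py1]
      · have e : (⟨star (x + y), star_mem (hle (add_mem hx hy))⟩ : ↥(relSCAlg (sAnchor r)))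
            = ⟨star x, star_mem (hle hx)⟩ + ⟨star y, star_mem (hle hy)⟩ :=
          Subtype.ext (star_add x y)
        rw [e, map_add, map_add, px2, py2]
    · -- zero
      constructor
      · have e : (⟨(0 : (Σ j, Y j) →ᵇ ℂ), hle (zero_mem _)⟩ : ↥(relSCAlg (sAnchor r))) = 0 :=
          Subtype.ext rfl
        rw [e, map_zero, map_zero]
      · have e : (⟨star (0 : (Σ j, Y j) →ᵇ ℂ), star_mem (hle (zero_mem _))⟩ :
            ↥(relSCAlg (sAnchor r))) = 0 := Subtype.ext (star_zero _)
        rw [e, map_zero, map_zero]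
    · -- mul
      intro x y hx hy px py
      obtain ⟨px1, px2⟩ := px
      obtain ⟨py1, py2⟩ := py
      constructor
      · have e : (⟨x * y, hle (mul_mem hx hy)⟩ : ↥(relSCAlg (sAnchor r)))
            = ⟨x, hle hx⟩ * ⟨y, hle hy⟩ := Subtype.ext rfl
        rw [e, hχ, hζ, px1, py1]
      · have e : (⟨star (x * y), star_mem (hle (mul_mem hx hy))⟩ : ↥(relSCAlg (sAnchor r)))
            = ⟨star y, star_mem (hle hy)⟩ * ⟨star x, star_mem (hle hx)⟩ :=
          Subtype.ext (star_mul x y)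
        rw [e, hχ, hζ, px2, py2]
    · -- smul
      intro c x hx px
      obtain ⟨px1, px2⟩ := px
      constructor
      · have e : (⟨c • x, hle (SMulMemClass.smul_mem c hx)⟩ : ↥(relSCAlg (sAnchor r)))
            = c • ⟨x, hle hx⟩ := Subtype.ext rfl
        rw [e, map_smul, map_smul, px1]
      · have e : (⟨star (c • x), star_mem (hle (SMulMemClass.smul_mem c hx))⟩ :
            ↥(relSCAlg (sAnchor r)))
            = star c • ⟨star x, star_mem (hle hx)⟩ := Subtype.ext (star_smul c x)
        rw [e, map_smul, map_smul, px2]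
    · -- star
      intro x hx px
      obtain ⟨px1, px2⟩ := px
      refine ⟨px2, ?_⟩
      have e : (⟨star (star x), star_mem (hle (star_mem hx))⟩ : ↥(relSCAlg (sAnchor r)))
          = ⟨x, hle hx⟩ := Subtype.ext (star_star x)
      rw [e]
      exact px1
  apply DFunLike.ext
  intro x
  have hd : (x : (Σ j, Y j) →ᵇ ℂ) ∈
      closure (NonUnitalStarAlgebra.adjoin ℂ (MSet r) : Set ((Σ j, Y j) →ᵇ ℂ)) :=
    dense_MSet r x.2
  have himg : (Subtype.val '' {y : ↥(relSCAlg (sAnchor r)) |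
      (y : (Σ j, Y j) →ᵇ ℂ) ∈ NonUnitalStarAlgebra.adjoin ℂ (MSet r)})
      = (NonUnitalStarAlgebra.adjoin ℂ (MSet r) : Set ((Σ j, Y j) →ᵇ ℂ)) := by
    ext z
    constructor
    · rintro ⟨y, hy, rfl⟩; exact hy
    · intro hz; exact ⟨⟨z, hle hz⟩, hz, rfl⟩
  have hsub : x ∈ closure {y : ↥(relSCAlg (sAnchor r)) |
      (y : (Σ j, Y j) →ᵇ ℂ) ∈ NonUnitalStarAlgebra.adjoin ℂ (MSet r)} := by
    rw [closure_subtype, himg]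
    exact hd
  have hcl : IsClosed {y : ↥(relSCAlg (sAnchor r)) | χ y = ζ y} :=
    isClosed_eq (map_continuous χ) (map_continuous ζ)
  have hss : {y : ↥(relSCAlg (sAnchor r)) |
      (y : (Σ j, Y j) →ᵇ ℂ) ∈ NonUnitalStarAlgebra.adjoin ℂ (MSet r)}
      ⊆ {y | χ y = ζ y} := fun y hy => (key ↑y hy).1
  exact closure_minimal hss hcl hsub

end Aux4
section Aux5
variable {ι : Type*} {B : ι → Type*} {Y : ι → Type*}
  [∀ i, TopologicalSpace (B i)] [∀ i, TopologicalSpace (Y i)]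
variable (r : ∀ i, C(Y i, B i))

lemma char_exists_ne_zero {X Bb : Type*} [TopologicalSpace X] [TopologicalSpace Bb]
    {ρ : C(X, Bb)} (φ : (RelSC ρ : Type _)) : ∃ a, φ.1 a ≠ 0 := by
  by_contra hc
  push_neg at hc
  exact φ.2.1 (DFunLike.ext _ _ hc)

/-- `χ` does not vanish on the `i`-th summand -/
def nzAt (i : ι) (χ : (RelSC (sAnchor r) : Type _)) : Prop :=
  ∃ a, χ.1 (extCLM r i a) ≠ 0

lemma nz_unique (χ : (RelSC (sAnchor r) : Type _)) {i j : ι}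
    (hi : nzAt r i χ) (hj : nzAt r j χ) : i = j := by
  by_contra hne
  obtain ⟨a, ha⟩ := hi
  obtain ⟨b, hb⟩ := hj
  have h0 : (extCLM r i a) * (extCLM r j b) = 0 :=
    Subtype.ext (by simpa using extBCF_mul_extBCF_ne hne (↑a : Y i →ᵇ ℂ) ↑b)
  have hm := χ.2.2 (extCLM r i a) (extCLM r j b)
  rw [h0, map_zero] at hm
  rcases mul_eq_zero.mp hm.symm with h | h
  · exact ha h
  · exact hb h

lemma nz_exists (χ : (RelSC (sAnchor r) : Type _)) : ∃ i, nzAt r i χ := by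
  by_contra hn
  push_neg at hn
  simp only [nzAt, not_exists, not_not] at hn
  apply χ.2.1
  have : χ.1 = (0 : WeakDual ℂ ↥(relSCAlg (sAnchor r))) := by
    apply agree_on_W r _ _ χ.2.2
      (by intro x y; show (0 : ℂ) = 0 * 0; rw [mul_zero])
    intro i a ha
    have e : (⟨extBCF i a, ext_mem r i ha⟩ : ↥(relSCAlg (sAnchor r)))
        = extCLM r i ⟨a, ha⟩ := Subtype.ext rfl
    rw [e, hn i ⟨a, ha⟩]
    rfl
  exact this

/-- a character on a summand algebra induces one on the total algebra -/
noncomputable def mkPhi (i : ι) (φ : (RelSC (r i) : Type _)) :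
    (RelSC (sAnchor r) : Type _) := by
  refine ⟨(φ.1 : ↥(relSCAlg (r i)) →L[ℂ] ℂ).comp (resCLM r i), ?_, ?_⟩
  · intro h0
    obtain ⟨a, ha⟩ := char_exists_ne_zero φ
    have h1 : φ.1 (resCLM r i (extCLM r i a)) = 0 :=
      DFunLike.congr_fun h0 (extCLM r i a)
    rw [resCLM_extCLM] at h1
    exact ha h1
  · intro x y
    show φ.1 (resCLM r i (x * y)) = _
    rw [resCLM_mul]
    exact φ.2.2 _ _

/-- a character on the total algebra induces one on the summand where it doesn't vanish -/
noncomputable def mkPsi (i : ι) (χ : (RelSC (sAnchor r) : Type _)) (h : nzAt r i χ) :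
    (RelSC (r i) : Type _) := by
  refine ⟨(χ.1 : ↥(relSCAlg (sAnchor r)) →L[ℂ] ℂ).comp (extCLM r i), ?_, ?_⟩
  · intro h0
    obtain ⟨a, ha⟩ := h
    exact ha (DFunLike.congr_fun h0 a)
  · intro x y
    show χ.1 (extCLM r i (x * y)) = _
    rw [extCLM_mul]
    exact χ.2.2 _ _

noncomputable def PhiFun : (Σ i, (RelSC (r i) : Type _)) → (RelSC (sAnchor r) : Type _) :=
  fun p => mkPhi r p.1 p.2

noncomputable def PsiFun (χ : (RelSC (sAnchor r) : Type _)) : Σ i, (RelSC (r i) : Type _) :=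
  ⟨(nz_exists r χ).choose, mkPsi r _ χ (nz_exists r χ).choose_spec⟩

lemma Psi_eq (χ : (RelSC (sAnchor r) : Type _)) (j : ι) (hj : nzAt r j χ) :
    PsiFun r χ = ⟨j, mkPsi r j χ hj⟩ := by
  have e : (nz_exists r χ).choose = j := nz_unique r χ (nz_exists r χ).choose_spec hj
  subst e
  rfl

lemma phi_psi (χ : (RelSC (sAnchor r) : Type _)) : PhiFun r (PsiFun r χ) = χ := by
  set i := (nz_exists r χ).choose with hi
  have spec : nzAt r i χ := (nz_exists r χ).choose_spec
  apply Subtype.ext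
  show ((mkPsi r i χ spec).1 : ↥(relSCAlg (r i)) →L[ℂ] ℂ).comp (resCLM r i) = χ.1
  apply agree_on_W r
  · intro x y
    show χ.1 (extCLM r i (resCLM r i (x * y))) = _
    rw [resCLM_mul, extCLM_mul]
    exact χ.2.2 _ _
  · exact χ.2.2
  · intro j a ha
    have eja : (⟨extBCF j a, ext_mem r j ha⟩ : ↥(relSCAlg (sAnchor r)))
        = extCLM r j ⟨a, ha⟩ := Subtype.ext rfl
    rcases eq_or_ne j i with rfl | hne
    · show χ.1 (extCLM r i (resCLM r i ⟨extBCF i a, ext_mem r i ha⟩)) = _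
      rw [eja, resCLM_extCLM]
    · show χ.1 (extCLM r i (resCLM r i ⟨extBCF j a, ext_mem r j ha⟩)) = _
      have e0 : resCLM r i ⟨extBCF j a, ext_mem r j ha⟩ = 0 := by
        apply Subtype.ext
        simpa using resBCF_extBCF_ne (Ne.symm hne) (↑(⟨a, ha⟩ : ↥(relSCAlg (r j))) : Y j →ᵇ ℂ)
      rw [e0, map_zero, map_zero]
      have hnj : ¬ nzAt r j χ := fun h => hne (nz_unique r χ h spec)
      simp only [nzAt, not_exists, not_not] at hnj
      rw [eja]
      exact (hnj ⟨a, ha⟩).symm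

lemma psi_phi (p : Σ i, (RelSC (r i) : Type _)) : PsiFun r (PhiFun r p) = p := by
  obtain ⟨i, φ⟩ := p
  obtain ⟨a, ha⟩ := char_exists_ne_zero φ
  have hj : nzAt r i (PhiFun r ⟨i, φ⟩) := by
    refine ⟨a, ?_⟩
    show φ.1 (resCLM r i (extCLM r i a)) ≠ 0
    rwa [resCLM_extCLM]
  rw [Psi_eq r _ i hj]
  apply congrArg (Sigma.mk i)
  apply Subtype.ext
  apply ContinuousLinearMap.ext
  intro x
  show φ.1 (resCLM r i (extCLM r i x)) = φ.1 x
  rw [resCLM_extCLM]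

lemma continuous_PhiFun : Continuous (PhiFun r) := by
  apply continuous_sigma
  intro i
  apply Continuous.subtype_mk
  apply WeakDual.continuous_of_continuous_eval
  intro x
  exact (WeakDual.eval_continuous (resCLM r i x)).comp continuous_subtype_val

lemma isOpen_nzAt (i : ι) : IsOpen {χ : (RelSC (sAnchor r) : Type _) | nzAt r i χ} := by
  have e : {χ : (RelSC (sAnchor r) : Type _) | nzAt r i χ}
      = ⋃ a, (fun χ : (RelSC (sAnchor r) : Type _) => χ.1 (extCLM r i a)) ⁻¹' {0}ᶜ := by
    ext χ
    simp [nzAt]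
  rw [e]
  apply isOpen_iUnion
  intro a
  exact (isOpen_compl_singleton).preimage
    ((WeakDual.eval_continuous (extCLM r i a)).comp continuous_subtype_val)

lemma continuous_PsiFun : Continuous (PsiFun r) := by
  rw [continuous_iff_continuousAt]
  intro χ
  set i := (nz_exists r χ).choose with hi
  have hmem : χ ∈ {χ : (RelSC (sAnchor r) : Type _) | nzAt r i χ} :=
    (nz_exists r χ).choose_spec
  apply ContinuousOn.continuousAt ?_ ((isOpen_nzAt r i).mem_nhds hmem)
  rw [continuousOn_iff_continuous_restrict]
  have e : Set.domRestrict {χ : (RelSC (sAnchor r) : Type _) | nzAt r i χ} (PsiFun r)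
      = fun x : {χ : (RelSC (sAnchor r) : Type _) | nzAt r i χ} =>
        (⟨i, mkPsi r i x.1 x.2⟩ : Σ j, (RelSC (r j) : Type _)) :=
    funext fun x => Psi_eq r x.1 i x.2
  rw [e]
  apply Continuous.comp continuous_sigmaMk
  apply Continuous.subtype_mk
  apply WeakDual.continuous_of_continuous_eval
  intro a
  exact (WeakDual.eval_continuous (extCLM r i a)).comp
    (continuous_subtype_val.comp continuous_subtype_val)

/-- the homeomorphism -/
noncomputable def relSCSigmaHomeo :
    (RelSC (sAnchor r) : Type _) ≃ₜ Σ i, (RelSC (r i) : Type _) where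
  toEquiv := ⟨PsiFun r, PhiFun r, phi_psi r, psi_phi r⟩
  continuous_toFun := continuous_PsiFun r
  continuous_invFun := continuous_PhiFun r

end Aux5

/-- The relative Stone–Čech compactification of a disjoint union is the disjoint union of
the relative Stone–Čech compactifications. -/
theorem relSC_sigma
    {ι : Type*} {B : ι → Type*} {Y : ι → Type*}
    [∀ i, TopologicalSpace (B i)] [∀ i, TopologicalSpace (Y i)]
    [∀ i, LocallyCompactSpace (B i)] [∀ i, T2Space (B i)]
    (r : ∀ i, C(Y i, B i)) :
    Nonempty ((RelSC (⟨Sigma.map id (fun i => ⇑(r i)),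
        Continuous.sigma_map (fun i => (r i).continuous)⟩ :
          C((Σ i, Y i), (Σ i, B i))) : Type _) ≃ₜ (Σ i, ↥(RelSC (r i)))) := by
  exact ⟨relSCSigmaHomeo r⟩
end
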